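/- With the notation of Proposition zk, there exists a constant C_κ > 0 depending only on α and κ such that for every integer ℓ > 0 and every x ∈ S_⋆, and every N > 2ℓ, | N^α Σ_{η ∈ E_N : η_x ≥ N - ℓ} m_⋆^η/a(η) − Z_{N,S}/κ_⋆ | ≤ C_κ / ℓ^{α-1}. -/

import Mathlib

open Finset Real

noncomputable def aZR (α : ℝ) (n : ℕ) : ℝ := if n = 0 then 1 else (n : ℝ) ^ α

def confs (S : Type*) [Fintype S] [DecidableEq S] (N : ℕ) : Finset (S → ℕ) :=
  (Fintype.piFinset fun _ => Finset.range (N + 1)).filter (fun η => ∑ x, η x = N)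

lemma aZR_pos (α : ℝ) (n : ℕ) : 0 < aZR α n := by
  unfold aZR
  split
  · norm_num
  · exact Real.rpow_pos_of_pos (by positivity) _

lemma aZR_eq (α : ℝ) {n : ℕ} (hn : 1 ≤ n) : aZR α n = (n : ℝ) ^ α := by
  unfold aZR; rw [if_neg (by omega)]

-- pointwise telescoping bound
lemma ptwise (α : ℝ) (hα : 1 < α) (n : ℕ) (hn : 1 ≤ n) :
    ((n : ℝ) ^ α)⁻¹ ≤ (2 / min 1 (α - 1)) * ((n : ℝ) ^ (1 - α) - ((n : ℝ) + 1) ^ (1 - α)) := by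
  have hc : 0 < min 1 (α - 1) := lt_min one_pos (by linarith)
  have hn0 : (0 : ℝ) < (n : ℝ) := by exact_mod_cast hn
  have hn1 : (0 : ℝ) < (n : ℝ) + 1 := by linarith
  -- key : (n/(n+1))^(α-1) ≤ 1 - min 1 (α-1) / (n+1)
  have key : ((n : ℝ) / ((n : ℝ) + 1)) ^ (α - 1) ≤ 1 - min 1 (α - 1) / ((n : ℝ) + 1) := by
    rcases le_total (α - 1) 1 with h1 | h1
    · have := _root_.rpow_one_add_le_one_add_mul_self
        (s := -(1 / ((n : ℝ) + 1))) (p := α - 1)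
        (by rw [neg_le, neg_neg]; rw [div_le_one hn1]; linarith)
        (by linarith) h1
      have he : (1 : ℝ) + -(1 / ((n : ℝ) + 1)) = (n : ℝ) / ((n : ℝ) + 1) := by
        field_simp
        ring
      rw [he] at this
      rw [min_eq_right h1]
      calc ((n : ℝ) / ((n : ℝ) + 1)) ^ (α - 1) ≤ 1 + (α - 1) * -(1 / ((n : ℝ) + 1)) := this
        _ = 1 - (α - 1) / ((n : ℝ) + 1) := by ring
    · have hb0 : (0 : ℝ) < (n : ℝ) / ((n : ℝ) + 1) := by positivity
      have hb1 : (n : ℝ) / ((n : ℝ) + 1) ≤ 1 := by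
        rw [div_le_one hn1]; linarith
      have := Real.rpow_le_rpow_of_exponent_ge hb0 hb1 h1
      rw [Real.rpow_one] at this
      rw [min_eq_left h1]
      calc ((n : ℝ) / ((n : ℝ) + 1)) ^ (α - 1) ≤ (n : ℝ) / ((n : ℝ) + 1) := this
        _ = 1 - 1 / ((n : ℝ) + 1) := by field_simp; ring
  -- turn key into the difference bound
  have hsplit : ((n : ℝ) + 1) ^ (1 - α) = (n : ℝ) ^ (1 - α) * ((n : ℝ) / ((n : ℝ) + 1)) ^ (α - 1) := by
    rw [Real.div_rpow hn0.le hn1.le, mul_div_assoc', ← Real.rpow_add hn0]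
    have h0 : (1 - α) + (α - 1) = 0 := by ring
    rw [h0, Real.rpow_zero]
    rw [eq_div_iff (ne_of_gt (Real.rpow_pos_of_pos hn1 _)), ← Real.rpow_add hn1]
    have h1 : (1 - α) + (α - 1) = 0 := by ring
    rw [h1, Real.rpow_zero]
  have hpow : (0 : ℝ) < (n : ℝ) ^ (1 - α) := Real.rpow_pos_of_pos hn0 _
  have hdiff : (n : ℝ) ^ (1 - α) - ((n : ℝ) + 1) ^ (1 - α)
      ≥ (n : ℝ) ^ (1 - α) * (min 1 (α - 1) / ((n : ℝ) + 1)) := by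
    rw [hsplit]
    have := mul_le_mul_of_nonneg_left key hpow.le
    nlinarith
  have h2n : ((n : ℝ) + 1) ≤ 2 * (n : ℝ) := by
    have : (1 : ℝ) ≤ (n : ℝ) := by exact_mod_cast hn
    linarith
  have hstep : (n : ℝ) ^ (1 - α) * (min 1 (α - 1) / ((n : ℝ) + 1))
      ≥ (min 1 (α - 1) / 2) * ((n : ℝ) ^ α)⁻¹ := by
    have hr : (n : ℝ) ^ (1 - α) = (n : ℝ) * ((n : ℝ) ^ α)⁻¹ := by
      rw [Real.rpow_sub hn0, Real.rpow_one]
      field_simp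
    rw [hr, ge_iff_le]
    have hhalf : (1:ℝ)/2 ≤ (n:ℝ)/((n:ℝ)+1) := by
      rw [div_le_div_iff₀ (by norm_num) hn1]; linarith
    have e1 : (n:ℝ) * ((n:ℝ)^α)⁻¹ * (min 1 (α-1) / ((n:ℝ)+1))
        = (min 1 (α-1) * ((n:ℝ)^α)⁻¹) * ((n:ℝ)/((n:ℝ)+1)) := by ring
    have e2 : min 1 (α-1) / 2 * ((n:ℝ)^α)⁻¹
        = (min 1 (α-1) * ((n:ℝ)^α)⁻¹) * ((1:ℝ)/2) := by ring
    rw [e1, e2]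
    exact mul_le_mul_of_nonneg_left hhalf (by positivity)
  have h2 : ((n : ℝ) ^ α)⁻¹ * (min 1 (α-1) / 2) ≤ ((n : ℝ) ^ (1 - α) - ((n : ℝ) + 1) ^ (1 - α)) := by
    calc ((n : ℝ) ^ α)⁻¹ * (min 1 (α-1) / 2) = (min 1 (α - 1) / 2) * ((n : ℝ) ^ α)⁻¹ := by ring
      _ ≤ (n : ℝ) ^ (1 - α) * (min 1 (α - 1) / ((n : ℝ) + 1)) := hstep
      _ ≤ _ := hdiff
  rw [ge_iff_le] at *
  calc ((n : ℝ) ^ α)⁻¹ = (2 / min 1 (α-1)) * (((n : ℝ) ^ α)⁻¹ * (min 1 (α-1) / 2)) := by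
        field_simp
    _ ≤ (2 / min 1 (α-1)) * ((n : ℝ) ^ (1 - α) - ((n : ℝ) + 1) ^ (1 - α)) := by
        apply mul_le_mul_of_nonneg_left h2 (by positivity)

lemma tail_sum (α : ℝ) (hα : 1 < α) (t M : ℕ) (ht : 1 ≤ t) :
    ∑ n ∈ Finset.Icc t M, ((n : ℝ) ^ α)⁻¹ ≤ (2 / min 1 (α - 1)) * (t : ℝ) ^ (1 - α) := by
  have hc : 0 < 2 / min 1 (α - 1) := by
    have : 0 < min 1 (α - 1) := lt_min one_pos (by linarith)
    positivity
  have g : ℕ → ℝ := fun n => (n : ℝ) ^ (1 - α)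
  calc ∑ n ∈ Finset.Icc t M, ((n : ℝ) ^ α)⁻¹
      ≤ ∑ n ∈ Finset.Icc t M, (2 / min 1 (α - 1)) *
          ((n : ℝ) ^ (1 - α) - ((n : ℝ) + 1) ^ (1 - α)) := by
        apply Finset.sum_le_sum
        intro n hn
        exact ptwise α hα n (le_trans ht (Finset.mem_Icc.mp hn).1)
    _ = (2 / min 1 (α - 1)) * ∑ n ∈ Finset.Icc t M,
          (((n : ℝ)) ^ (1 - α) - (((n : ℝ) + 1)) ^ (1 - α)) := by rw [Finset.mul_sum]
    _ ≤ (2 / min 1 (α - 1)) * (t : ℝ) ^ (1 - α) := by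
        apply mul_le_mul_of_nonneg_left _ hc.le
        have hIcc : Finset.Icc t M = Finset.Ico t (M + 1) := by rw [Finset.Ico_add_one_right_eq_Icc]
        rw [hIcc, Finset.sum_Ico_eq_sum_range]
        set F : ℕ → ℝ := fun i => ((t + i : ℕ) : ℝ) ^ (1 - α) with hF
        have hcongr : ∀ k ∈ Finset.range (M + 1 - t),
            (((t + k : ℕ) : ℝ)) ^ (1-α) - ((((t + k : ℕ) : ℝ)) + 1) ^ (1-α) = F k - F (k+1) := by
          intro k _
          have h2 : ((t + (k + 1) : ℕ) : ℝ) = ((t + k : ℕ) : ℝ) + 1 := by push_cast; ring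
          simp only [hF, h2]
        rw [Finset.sum_congr rfl hcongr, Finset.sum_range_sub' F]
        have h0 : F 0 = (t : ℝ) ^ (1 - α) := by simp [hF]
        have h1 : (0:ℝ) ≤ F (M + 1 - t) := Real.rpow_nonneg (by positivity) _
        linarith [h0, h1]

lemma geom_bound (α : ℝ) (r : ℝ) (hr0 : 0 ≤ r) (hr1 : r < 1) :
    ∃ B : ℝ, 0 < B ∧ ∀ n : ℕ, 1 ≤ n → (n : ℝ) ^ (α - 1) * r ^ n ≤ B := by
  set k := ⌈α⌉₊ with hk
  have htend := tendsto_pow_const_mul_const_pow_of_lt_one k hr0 hr1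
  obtain ⟨b, hb⟩ := htend.bddAbove_range
  refine ⟨max b 1, lt_of_lt_of_le one_pos (le_max_right _ _), ?_⟩
  intro n hn
  have hn1 : (1 : ℝ) ≤ (n : ℝ) := by exact_mod_cast hn
  have h1 : (n : ℝ) ^ (α - 1) ≤ (n : ℝ) ^ (k : ℕ) := by
    rw [← Real.rpow_natCast (n : ℝ) k]
    apply Real.rpow_le_rpow_of_exponent_le hn1
    calc α - 1 ≤ α := by linarith
      _ ≤ k := Nat.le_ceil α
  have h2 : (n : ℝ) ^ (k : ℕ) * r ^ n ≤ b := hb ⟨n, rfl⟩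
  have hrn : 0 ≤ r ^ n := pow_nonneg hr0 n
  calc (n : ℝ) ^ (α - 1) * r ^ n ≤ (n : ℝ) ^ (k : ℕ) * r ^ n :=
        mul_le_mul_of_nonneg_right h1 hrn
    _ ≤ b := h2
    _ ≤ max b 1 := le_max_left _ _

lemma sum_union_le {β : Type*} [DecidableEq β] (u v : Finset β) (f : β → ℝ)
    (hf : ∀ b, 0 ≤ f b) : ∑ b ∈ u ∪ v, f b ≤ ∑ b ∈ u, f b + ∑ b ∈ v, f b := by
  have h := Finset.sum_union_inter (s₁ := u) (s₂ := v) (f := f)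
  have : 0 ≤ ∑ b ∈ u ∩ v, f b := Finset.sum_nonneg fun b _ => hf b
  linarith

lemma sum_biUnion_le_sum {ι β : Type*} [DecidableEq β] (s : Finset ι) (t : ι → Finset β)
    (f : β → ℝ) (hf : ∀ b, 0 ≤ f b) :
    ∑ b ∈ s.biUnion t, f b ≤ ∑ i ∈ s, ∑ b ∈ t i, f b := by
  classical
  induction s using Finset.induction with
  | empty => simp
  | insert a s' h ih =>
    rw [Finset.biUnion_insert, Finset.sum_insert h]
    calc ∑ b ∈ t a ∪ s'.biUnion t, f b ≤ ∑ b ∈ t a, f b + ∑ b ∈ s'.biUnion t, f b :=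
          sum_union_le _ _ _ hf
      _ ≤ ∑ b ∈ t a, f b + ∑ i ∈ s', ∑ b ∈ t i, f b := by linarith

lemma sum_conf_prod_le {S : Type*} [Fintype S] [DecidableEq S] (N : ℕ)
    (T : Finset (S → ℕ)) (hT : T ⊆ confs S N) (z0 : S)
    (h : S → ℕ → ℝ) (hh : ∀ z n, 0 ≤ h z n) (hz0 : ∀ n, h z0 n = 1)
    (t : S → Finset ℕ) (ht : ∀ η ∈ T, ∀ z, z ≠ z0 → η z ∈ t z) :
    ∑ η ∈ T, ∏ z, h z (η z) ≤ ∏ z ∈ Finset.univ.erase z0, ∑ n ∈ t z, h z n := by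
  classical
  set ψ : (S → ℕ) → (S → ℕ) := fun η => Function.update η z0 0 with hψ
  have hsum : ∀ η ∈ T, η z0 + ∑ z ∈ Finset.univ.erase z0, η z = N := by
    intro η hη
    have := (Finset.mem_filter.mp (hT hη)).2
    rw [Finset.add_sum_erase _ _ (Finset.mem_univ z0)]
    exact this
  have hinj : ∀ η1 ∈ T, ∀ η2 ∈ T, ψ η1 = ψ η2 → η1 = η2 := by
    intro η1 h1 η2 h2 heq
    have hne : ∀ z, z ≠ z0 → η1 z = η2 z := by
      intro z hz
      have := congrFun heq z
      simpa [hψ, Function.update_of_ne hz] using this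
    have hs : ∑ z ∈ Finset.univ.erase z0, η1 z = ∑ z ∈ Finset.univ.erase z0, η2 z :=
      Finset.sum_congr rfl fun z hz => hne z (Finset.ne_of_mem_erase hz)
    have e1 := hsum η1 h1
    have e2 := hsum η2 h2
    funext z
    by_cases hz : z = z0
    · subst hz; omega
    · exact hne z hz
  set t' : S → Finset ℕ := fun z => if z = z0 then {0} else t z with ht'
  have step1 : ∑ η ∈ T, ∏ z, h z (η z) = ∑ η ∈ T, ∏ z, h z (ψ η z) := by
    apply Finset.sum_congr rfl
    intro η _
    apply Finset.prod_congr rfl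
    intro z _
    by_cases hz : z = z0
    · subst hz; rw [hz0, hz0]
    · simp [hψ, Function.update_of_ne hz]
  have step2 : ∑ η ∈ T.image ψ, ∏ z, h z (η z) = ∑ η ∈ T, ∏ z, h z (ψ η z) :=
    Finset.sum_image (f := fun η => ∏ z, h z (η z)) hinj
  have step3 : ∑ η ∈ T.image ψ, ∏ z, h z (η z) ≤
      ∑ η ∈ Fintype.piFinset t', ∏ z, h z (η z) := by
    apply Finset.sum_le_sum_of_subset_of_nonneg
    · intro η' hη'
      obtain ⟨η, hη, rfl⟩ := Finset.mem_image.mp hη'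
      rw [Fintype.mem_piFinset]
      intro z
      by_cases hz : z = z0
      · subst hz; simp [hψ, ht']
      · simp only [ht', if_neg hz, hψ, Function.update_of_ne hz]
        exact ht η hη z hz
    · intro η _ _
      exact Finset.prod_nonneg fun z _ => hh z _
  have step4 : ∑ η ∈ Fintype.piFinset t', ∏ z, h z (η z) =
      ∏ z, ∑ n ∈ t' z, h z n := (Finset.prod_univ_sum t' h).symm
  have step5 : ∏ z, ∑ n ∈ t' z, h z n = ∏ z ∈ Finset.univ.erase z0, ∑ n ∈ t z, h z n := by
    rw [← Finset.mul_prod_erase _ _ (Finset.mem_univ z0)]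
    have e0 : ∑ n ∈ t' z0, h z0 n = 1 := by simp [ht', hz0]
    rw [e0, one_mul]
    apply Finset.prod_congr rfl
    intro z hz
    rw [ht']
    simp [Finset.ne_of_mem_erase hz]
  rw [step1, ← step2, ← step5, ← step4]
  exact step3

lemma sum_swap_eq {S : Type*} [Fintype S] [DecidableEq S] (N ℓ : ℕ) (F : S → ℕ → ℝ)
    (x y : S) (hxy : ∀ n, F x n = F y n) :
    ∑ η ∈ (confs S N).filter (fun η => N - ℓ ≤ η x), ∏ z, F z (η z)
    = ∑ η ∈ (confs S N).filter (fun η => N - ℓ ≤ η y), ∏ z, F z (η z) := by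
  classical
  set e := Equiv.swap x y with he
  have hmem : ∀ (η : S → ℕ), η ∈ confs S N → (η ∘ e) ∈ confs S N := by
    intro η hη
    rw [confs, Finset.mem_filter] at hη ⊢
    constructor
    · rw [Fintype.mem_piFinset]
      intro z
      exact Fintype.mem_piFinset.mp hη.1 (e z)
    · rw [← hη.2]
      exact Equiv.sum_comp e η
  have hprod : ∀ (η : S → ℕ), ∏ z, F z (η z) = ∏ z, F z ((η ∘ e) z) := by
    intro η
    have h1 := Equiv.prod_comp e (fun w => F (e w) (η w))
    simp only [he] at h1 ⊢
    have h2 : ∀ z, F (Equiv.swap x y (Equiv.swap x y z)) (η (Equiv.swap x y z))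
        = F z (η (Equiv.swap x y z)) := by
      intro z; rw [Equiv.swap_apply_self]
    rw [Finset.prod_congr rfl (fun z _ => h2 z)] at h1
    have h3 : ∏ w, F (Equiv.swap x y w) (η w) = ∏ w, F w (η w) := by
      apply Finset.prod_congr rfl
      intro w _
      by_cases hwx : w = x
      · subst hwx; rw [Equiv.swap_apply_left, hxy]
      · by_cases hwy : w = y
        · subst hwy; rw [Equiv.swap_apply_right, hxy]
        · rw [Equiv.swap_apply_of_ne_of_ne hwx hwy]
    rw [h3] at h1
    simp only [Function.comp_apply]
    exact h1.symm
  apply Finset.sum_nbij' (i := fun η => η ∘ e) (j := fun η => η ∘ e)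
  · intro η hη
    rw [Finset.mem_filter] at hη ⊢
    refine ⟨hmem η hη.1, ?_⟩
    have : (η ∘ e) y = η x := by simp [he, Function.comp, Equiv.swap_apply_right]
    rw [this]; exact hη.2
  · intro η hη
    rw [Finset.mem_filter] at hη ⊢
    refine ⟨hmem η hη.1, ?_⟩
    have : (η ∘ e) x = η y := by simp [he, Function.comp, Equiv.swap_apply_left]
    rw [this]; exact hη.2
  · intro η _
    funext z
    simp [he, Function.comp, Equiv.swap_apply_self]
  · intro η _
    funext z
    simp [he, Function.comp, Equiv.swap_apply_self]
  · intro η _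
    exact hprod η

theorem condensate_measure_estimate (S : Type*) [Fintype S] [DecidableEq S]
    (hκ : 2 ≤ Fintype.card S) (α : ℝ) (hα : 1 < α)
    (m : S → ℝ) (hm : ∀ x, 0 < m x) (hm1 : ∑ x, m x = 1)
    (Mstar : ℝ) (hMstar : IsGreatest (Set.range m) Mstar)
    (Sstar : Finset S) (hSstar : Sstar = Finset.univ.filter (fun x => m x = Mstar))
    (κstar : ℕ) (hκstar : κstar = Sstar.card)
    (mstar : S → ℝ) (hmstar : ∀ x, mstar x = m x / Mstar)
    (Z : ℕ → ℝ)
    (hZ : ∀ N, Z N = (N : ℝ) ^ α *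
      ∑ η ∈ confs S N, ∏ x, mstar x ^ η x / aZR α (η x)) :
    ∃ C : ℝ, 0 < C ∧ ∀ ℓ : ℕ, 0 < ℓ → ∀ x ∈ Sstar, ∀ N : ℕ, 2 * ℓ < N →
      |(N : ℝ) ^ α *
          (∑ η ∈ (confs S N).filter (fun η => N - ℓ ≤ η x),
            ∏ z, mstar z ^ η z / aZR α (η z)) - Z N / (κstar : ℝ)| ≤
        C / (ℓ : ℝ) ^ (α - 1) := by
  classical
  obtain ⟨x0, hx0⟩ := hMstar.1
  have hM0 : 0 < Mstar := hx0 ▸ hm x0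
  have hms_pos : ∀ z, 0 < mstar z := fun z => by rw [hmstar]; exact div_pos (hm z) hM0
  have hms_le1 : ∀ z, mstar z ≤ 1 := fun z => by
    rw [hmstar, div_le_one hM0]; exact hMstar.2 ⟨z, rfl⟩
  have hmem_star : ∀ z, z ∈ Sstar ↔ m z = Mstar := by
    intro z; rw [hSstar]; simp
  have hms_one : ∀ z ∈ Sstar, mstar z = 1 := fun z hz => by
    rw [hmstar, (hmem_star z).mp hz, div_self hM0.ne']
  have hms_lt1 : ∀ z ∉ Sstar, mstar z < 1 := fun z hz => by
    rw [hmstar, div_lt_one hM0]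
    exact lt_of_le_of_ne (hMstar.2 ⟨z, rfl⟩) (fun hc => hz ((hmem_star z).mpr hc))
  have hκs1 : 1 ≤ κstar := by
    rw [hκstar]
    exact Finset.card_pos.mpr ⟨x0, (hmem_star x0).mpr hx0⟩
  have hSne : Nonempty S := Fintype.card_pos_iff.mp (by omega)
  set κ : ℕ := Fintype.card S with hκdef
  have hκ0 : 0 < κ := by omega
  have hκℝ : (0:ℝ) < (κ:ℝ) := by exact_mod_cast hκ0
  -- constants
  set c2 : ℝ := 2 / min 1 (α - 1) with hc2
  have hminpos : 0 < min 1 (α - 1) := lt_min one_pos (by linarith)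
  have hc2pos : 0 < c2 := by rw [hc2]; positivity
  set A : ℝ := 1 + ∑' n : ℕ, ((n:ℝ) ^ α)⁻¹ with hA
  have hsummable : Summable (fun n : ℕ => ((n:ℝ) ^ α)⁻¹) := by
    simpa [one_div] using Real.summable_one_div_nat_rpow.mpr hα
  have htsum_nonneg : 0 ≤ ∑' n : ℕ, ((n:ℝ) ^ α)⁻¹ :=
    tsum_nonneg (fun n => by positivity)
  have hA1 : (1:ℝ) ≤ A := by rw [hA]; linarith
  have hA0 : (0:ℝ) < A := lt_of_lt_of_le one_pos hA1
  have hApartial : ∀ M : ℕ, ∑ n ∈ Finset.range M, (aZR α n)⁻¹ ≤ A := by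
    intro M
    have step : ∀ n ∈ Finset.range M, (aZR α n)⁻¹ ≤
        (if n = 0 then (1:ℝ) else 0) + ((n:ℝ) ^ α)⁻¹ := by
      intro n _
      by_cases hn : n = 0
      · subst hn
        simp [aZR, Real.zero_rpow (by linarith : α ≠ 0)]
      · rw [aZR, if_neg hn, if_neg hn, zero_add]
    calc ∑ n ∈ Finset.range M, (aZR α n)⁻¹
        ≤ ∑ n ∈ Finset.range M, ((if n = 0 then (1:ℝ) else 0) + ((n:ℝ) ^ α)⁻¹) :=
          Finset.sum_le_sum step
      _ = (∑ n ∈ Finset.range M, if n = 0 then (1:ℝ) else 0)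
          + ∑ n ∈ Finset.range M, ((n:ℝ) ^ α)⁻¹ := Finset.sum_add_distrib
      _ ≤ 1 + ∑' n : ℕ, ((n:ℝ) ^ α)⁻¹ := by
          apply add_le_add
          · rw [Finset.sum_ite_eq' (Finset.range M) 0 (fun _ => (1:ℝ))]
            split <;> norm_num
          · exact Summable.sum_le_tsum _ (fun n _ => by positivity) hsummable
  -- geometric constants
  have hBex : ∀ z : S, ∃ B : ℝ, 0 < B ∧
      (mstar z < 1 → ∀ n : ℕ, 1 ≤ n → (n:ℝ) ^ (α - 1) * (mstar z) ^ n ≤ B) := by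
    intro z
    by_cases hz : mstar z < 1
    · obtain ⟨B, hB0, hB⟩ := geom_bound α (mstar z) (hms_pos z).le hz
      exact ⟨B, hB0, fun _ => hB⟩
    · exact ⟨1, one_pos, fun hc => absurd hc hz⟩
  choose Bf hBfpos hBf using hBex
  set B : ℝ := ∑ z, Bf z with hB
  have hBpos : 0 < B := Finset.sum_pos (fun z _ => hBfpos z) Finset.univ_nonempty
  have hBge : ∀ z, Bf z ≤ B := fun z =>
    Finset.single_le_sum (fun z _ => (hBfpos z).le) (Finset.mem_univ z)
  -- the weight function
  set f : S → ℕ → ℝ := fun z n => mstar z ^ n / aZR α n with hfdef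
  have hf_nonneg : ∀ z n, 0 ≤ f z n := fun z n =>
    div_nonneg (pow_nonneg (hms_pos z).le n) (aZR_pos α n).le
  have hf_le_inv : ∀ z n, f z n ≤ (aZR α n)⁻¹ := fun z n => by
    show mstar z ^ n / aZR α n ≤ (aZR α n)⁻¹
    rw [div_eq_mul_inv]
    calc mstar z ^ n * (aZR α n)⁻¹ ≤ 1 * (aZR α n)⁻¹ := by
          apply mul_le_mul_of_nonneg_right _ (inv_nonneg.mpr (aZR_pos α n).le)
          exact pow_le_one₀ (hms_pos z).le (hms_le1 z)
      _ = (aZR α n)⁻¹ := one_mul _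
  have hfsum_le_A : ∀ (z : S) (M : ℕ), ∑ n ∈ Finset.range M, f z n ≤ A := by
    intro z M
    calc ∑ n ∈ Finset.range M, f z n ≤ ∑ n ∈ Finset.range M, (aZR α n)⁻¹ :=
          Finset.sum_le_sum (fun n _ => hf_le_inv z n)
      _ ≤ A := hApartial M
  -- the constant
  refine ⟨(κ:ℝ) * (B * (κ:ℝ) ^ (α-1) * (κ:ℝ) ^ α * A ^ κ)
      + (κ:ℝ) * (κ:ℝ) * ((κ:ℝ) ^ α * (c2 * (κ:ℝ) ^ (α-1)) * A ^ κ), ?_, ?_⟩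
  · have h1 : (0:ℝ) < (κ:ℝ) ^ (α-1) := Real.rpow_pos_of_pos hκℝ _
    have h2 : (0:ℝ) < (κ:ℝ) ^ α := Real.rpow_pos_of_pos hκℝ _
    have h3 : (0:ℝ) < A ^ κ := pow_pos hA0 κ
    positivity
  intro ℓ hℓ x hx N hN
  have hN0 : 0 < N := by omega
  have hNℝ : (0:ℝ) < (N:ℝ) := by exact_mod_cast hN0
  have hℓℝ : (0:ℝ) < (ℓ:ℝ) := by exact_mod_cast hℓ
  have hNα : (0:ℝ) < (N:ℝ) ^ α := Real.rpow_pos_of_pos hNℝ _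
  -- weight nonneg
  have hw_nonneg : ∀ η : S → ℕ, 0 ≤ ∏ z, f z (η z) := fun η =>
    Finset.prod_nonneg fun z _ => hf_nonneg z (η z)
  -- the big and bad sets
  set bigset : Finset (S → ℕ) :=
    (confs S N).filter (fun η => ∃ y ∈ Sstar, N - ℓ ≤ η y) with hbigset
  set badset : Finset (S → ℕ) :=
    (confs S N).filter (fun η => ¬ ∃ y ∈ Sstar, N - ℓ ≤ η y) with hbadset
  -- step 1 : symmetry
  have hgood : (κstar:ℝ) * ∑ η ∈ (confs S N).filter (fun η => N - ℓ ≤ η x), ∏ z, f z (η z)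
      = ∑ η ∈ bigset, ∏ z, f z (η z) := by
    have hsymm : ∀ y ∈ Sstar,
        ∑ η ∈ (confs S N).filter (fun η => N - ℓ ≤ η y), ∏ z, f z (η z)
        = ∑ η ∈ (confs S N).filter (fun η => N - ℓ ≤ η x), ∏ z, f z (η z) := by
      intro y hy
      exact sum_swap_eq N ℓ f y x (fun n => by
        show mstar y ^ n / aZR α n = mstar x ^ n / aZR α n
        rw [hms_one y hy, hms_one x hx])
    have hdisj : (↑Sstar : Set S).PairwiseDisjoint
        (fun y => (confs S N).filter (fun η => N - ℓ ≤ η y)) := by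
      intro y1 hy1 y2 hy2 hne
      apply Finset.disjoint_left.mpr
      intro η hη1 hη2
      rw [Finset.mem_filter] at hη1 hη2
      have hsumN : ∑ z, η z = N := (Finset.mem_filter.mp hη1.1).2
      have hpair : η y1 + η y2 ≤ N := by
        rw [← hsumN]
        rw [← Finset.sum_pair hne]
        apply Finset.sum_le_sum_of_subset
        intro z _
        exact Finset.mem_univ z
      omega
    have hbig : bigset = Sstar.biUnion
        (fun y => (confs S N).filter (fun η => N - ℓ ≤ η y)) := by
      rw [hbigset]
      ext η
      simp only [Finset.mem_filter, Finset.mem_biUnion]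
      constructor
      · rintro ⟨h1, y, hy, h2⟩; exact ⟨y, hy, h1, h2⟩
      · rintro ⟨y, hy, h1, h2⟩; exact ⟨h1, y, hy, h2⟩
    rw [hbig, Finset.sum_biUnion hdisj]
    rw [Finset.sum_congr rfl hsymm, Finset.sum_const, hκstar, nsmul_eq_mul]
  -- step 2 : splitting
  have hsplit : ∑ η ∈ confs S N, ∏ z, f z (η z)
      = (∑ η ∈ bigset, ∏ z, f z (η z)) + ∑ η ∈ badset, ∏ z, f z (η z) := by
    rw [hbigset, hbadset]
    exact (Finset.sum_filter_add_sum_filter_not _ _ _).symm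
  -- step 3 : covering the bad set
  set Uset : S → Finset (S → ℕ) := fun z0 =>
    (confs S N).filter (fun η => N ≤ κ * η z0 ∧ z0 ∉ Sstar) with hUset
  set Tset : S × S → Finset (S → ℕ) := fun p =>
    (confs S N).filter (fun η => N ≤ κ * η p.1 ∧ ℓ < κ * η p.2) with hTset
  have hUsub : ∀ z0, Uset z0 ⊆ confs S N := fun z0 => Finset.filter_subset _ _
  have hTsub : ∀ p, Tset p ⊆ confs S N := fun p => Finset.filter_subset _ _
  have hcover : badset ⊆ (Finset.univ.biUnion Uset) ∪
      ((Finset.univ : Finset S).offDiag.biUnion Tset) := by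
    intro η hη
    rw [hbadset, Finset.mem_filter] at hη
    obtain ⟨hηc, hηbad⟩ := hη
    have hηsum : ∑ z, η z = N := (Finset.mem_filter.mp hηc).2
    obtain ⟨z0, -, hz0max⟩ := Finset.exists_max_image Finset.univ η
      ⟨Classical.arbitrary S, Finset.mem_univ _⟩
    have hmax : N ≤ κ * η z0 := by
      have := Finset.sum_le_card_nsmul Finset.univ η (η z0)
        (fun z _ => hz0max z (Finset.mem_univ z))
      rwa [hηsum, Finset.card_univ, smul_eq_mul] at this
    by_cases hz0s : z0 ∈ Sstar
    · push_neg at hηbad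
      have hz0small : η z0 + ℓ < N := by
        have := hηbad z0 hz0s
        omega
      have hz1 : ∃ z1, z1 ≠ z0 ∧ ℓ < κ * η z1 := by
        by_contra hcon
        push_neg at hcon
        have hE : η z0 + ∑ z ∈ Finset.univ.erase z0, η z = N := by
          rw [Finset.add_sum_erase _ _ (Finset.mem_univ z0)]; exact hηsum
        have hE1 : ℓ + 1 ≤ ∑ z ∈ Finset.univ.erase z0, η z := by omega
        have h2 : κ * (ℓ + 1) ≤ κ * ∑ z ∈ Finset.univ.erase z0, η z :=
          Nat.mul_le_mul_left κ hE1
        have h1 : κ * ∑ z ∈ Finset.univ.erase z0, η z ≤ (κ - 1) * ℓ := by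
          rw [Finset.mul_sum]
          calc ∑ z ∈ Finset.univ.erase z0, κ * η z
              ≤ ∑ z ∈ Finset.univ.erase z0, ℓ :=
                Finset.sum_le_sum (fun z hz => hcon z (Finset.ne_of_mem_erase hz))
            _ = (κ - 1) * ℓ := by
                rw [Finset.sum_const, Finset.card_erase_of_mem (Finset.mem_univ z0),
                  Finset.card_univ, smul_eq_mul]
        have hfinal : κ * ℓ + κ ≤ κ * ℓ := by
          calc κ * ℓ + κ = κ * (ℓ + 1) := by ring
            _ ≤ κ * ∑ z ∈ Finset.univ.erase z0, η z := h2
            _ ≤ (κ - 1) * ℓ := h1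
            _ ≤ κ * ℓ := Nat.mul_le_mul_right ℓ (by omega)
        omega
      obtain ⟨z1, hz1ne, hz1big⟩ := hz1
      apply Finset.mem_union_right
      apply Finset.mem_biUnion.mpr
      refine ⟨(z0, z1), ?_, ?_⟩
      · rw [Finset.mem_offDiag]
        exact ⟨Finset.mem_univ _, Finset.mem_univ _, Ne.symm hz1ne⟩
      · simp only [hTset, Finset.mem_filter]
        exact ⟨hηc, hmax, hz1big⟩
    · apply Finset.mem_union_left
      apply Finset.mem_biUnion.mpr
      refine ⟨z0, Finset.mem_univ _, ?_⟩
      simp only [hUset, Finset.mem_filter]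
      exact ⟨hηc, hmax, hz0s⟩
  have hbad_le : ∑ η ∈ badset, ∏ z, f z (η z) ≤
      (∑ z0, ∑ η ∈ Uset z0, ∏ z, f z (η z))
      + ∑ p ∈ (Finset.univ : Finset S).offDiag, ∑ η ∈ Tset p, ∏ z, f z (η z) := by
    calc ∑ η ∈ badset, ∏ z, f z (η z)
        ≤ ∑ η ∈ (Finset.univ.biUnion Uset) ∪
            ((Finset.univ : Finset S).offDiag.biUnion Tset), ∏ z, f z (η z) :=
          Finset.sum_le_sum_of_subset_of_nonneg hcover (fun η _ _ => hw_nonneg η)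
      _ ≤ (∑ η ∈ Finset.univ.biUnion Uset, ∏ z, f z (η z))
          + ∑ η ∈ ((Finset.univ : Finset S).offDiag.biUnion Tset), ∏ z, f z (η z) :=
          sum_union_le _ _ _ hw_nonneg
      _ ≤ _ := add_le_add (sum_biUnion_le_sum _ _ _ hw_nonneg)
          (sum_biUnion_le_sum _ _ _ hw_nonneg)
  -- common bounds
  have hinv_bound : ∀ n : ℕ, N ≤ κ * n → (aZR α n)⁻¹ ≤ (κ:ℝ) ^ α / (N:ℝ) ^ α := by
    intro n hn
    have hn1 : 1 ≤ n := by
      rcases Nat.eq_zero_or_pos n with h | h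
      · subst h; rw [Nat.mul_zero] at hn; omega
      · exact h
    rw [aZR_eq α hn1]
    have hnℝ : (0:ℝ) < (n:ℝ) := by exact_mod_cast hn1
    have hdivle : (N:ℝ) / (κ:ℝ) ≤ (n:ℝ) := by
      rw [div_le_iff₀ hκℝ]
      calc (N:ℝ) ≤ ((κ * n : ℕ):ℝ) := by exact_mod_cast hn
        _ = (n:ℝ) * (κ:ℝ) := by push_cast; ring
    have h1 : ((N:ℝ)/(κ:ℝ)) ^ α ≤ (n:ℝ) ^ α :=
      Real.rpow_le_rpow (by positivity) hdivle (by linarith)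
    calc ((n:ℝ) ^ α)⁻¹ ≤ (((N:ℝ)/(κ:ℝ)) ^ α)⁻¹ :=
          inv_anti₀ (Real.rpow_pos_of_pos (by positivity) _) h1
      _ = (κ:ℝ) ^ α / (N:ℝ) ^ α := by
          rw [Real.div_rpow hNℝ.le hκℝ.le, inv_div]
  have hκα1 : (0:ℝ) < (κ:ℝ) ^ (α - 1) := Real.rpow_pos_of_pos hκℝ _
  have hκα : (0:ℝ) < (κ:ℝ) ^ α := Real.rpow_pos_of_pos hκℝ _
  have hℓ1α : (0:ℝ) < (ℓ:ℝ) ^ (1 - α) := Real.rpow_pos_of_pos hℓℝ _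
  have hAκ : (0:ℝ) < A ^ κ := pow_pos hA0 κ
  have hrpow_div : ∀ n : ℕ, ℓ ≤ κ * n →
      ((n:ℝ)) ^ (1 - α) ≤ (κ:ℝ) ^ (α-1) * (ℓ:ℝ) ^ (1-α) := by
    intro n hn
    have hn0 : 0 < n := by
      rcases Nat.eq_zero_or_pos n with h | h
      · subst h; rw [Nat.mul_zero] at hn; omega
      · exact h
    have hdivle : (ℓ:ℝ) / (κ:ℝ) ≤ (n:ℝ) := by
      rw [div_le_iff₀ hκℝ]
      calc (ℓ:ℝ) ≤ ((κ * n : ℕ):ℝ) := by exact_mod_cast hn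
        _ = (n:ℝ) * (κ:ℝ) := by push_cast; ring
    calc ((n:ℝ)) ^ (1-α) ≤ ((ℓ:ℝ)/(κ:ℝ)) ^ (1-α) :=
          Real.rpow_le_rpow_of_nonpos (by positivity) hdivle (by linarith)
      _ = (κ:ℝ) ^ (α-1) * (ℓ:ℝ) ^ (1-α) := by
          rw [Real.div_rpow hℓℝ.le hκℝ.le]
          have hneg : (κ:ℝ) ^ (1-α) = ((κ:ℝ) ^ (α-1))⁻¹ := by
            rw [← Real.rpow_neg hκℝ.le, show -(α-1) = 1-α by ring]
          rw [hneg, div_eq_mul_inv, inv_inv, mul_comm]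
  -- bound on U-sets
  have hU_bound : ∀ z0 : S, ∑ η ∈ Uset z0, ∏ z, f z (η z) ≤
      (B * ((κ:ℝ) ^ (α-1) * (ℓ:ℝ) ^ (1-α)) * ((κ:ℝ) ^ α / (N:ℝ) ^ α)) * A ^ κ := by
    intro z0
    set coef : ℝ := B * ((κ:ℝ) ^ (α-1) * (ℓ:ℝ) ^ (1-α)) * ((κ:ℝ) ^ α / (N:ℝ) ^ α) with hcoef
    have hcoef0 : 0 ≤ coef := by positivity
    set hfun : S → ℕ → ℝ := fun z n => if z = z0 then 1 else f z n with hhfun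
    have hh_nonneg : ∀ z n, 0 ≤ hfun z n := by
      intro z n
      by_cases hz : z = z0
      · simp [hhfun, hz]
      · simp only [hhfun, if_neg hz]
        exact hf_nonneg z n
    have hh_one : ∀ n, hfun z0 n = 1 := by intro n; simp [hhfun]
    have hprod_eq : ∀ η : S → ℕ, ∏ z ∈ Finset.univ.erase z0, f z (η z)
        = ∏ z, hfun z (η z) := by
      intro η
      rw [← Finset.mul_prod_erase _ (fun z => hfun z (η z)) (Finset.mem_univ z0),
        hh_one, one_mul]
      exact Finset.prod_congr rfl (fun z hz => by
        simp only [hhfun, if_neg (Finset.ne_of_mem_erase hz)])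
    have hpt : ∀ η ∈ Uset z0, ∏ z, f z (η z) ≤ coef * ∏ z, hfun z (η z) := by
      intro η hη
      simp only [hUset, Finset.mem_filter] at hη
      obtain ⟨hηc, hmax, hz0s⟩ := hη
      have hn1 : 1 ≤ η z0 := by
        rcases Nat.eq_zero_or_pos (η z0) with h | h
        · rw [h, Nat.mul_zero] at hmax; omega
        · exact h
      have hnℝ : (0:ℝ) < ((η z0 : ℕ):ℝ) := by exact_mod_cast hn1
      have hf0 : f z0 (η z0) ≤ coef := by
        show mstar z0 ^ (η z0) / aZR α (η z0) ≤ coef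
        rw [div_eq_mul_inv]
        have hp : (0:ℝ) < ((η z0 : ℕ):ℝ) ^ (α-1) := Real.rpow_pos_of_pos hnℝ _
        have hB1 : ((η z0:ℕ):ℝ) ^ (α-1) * mstar z0 ^ (η z0) ≤ B :=
          le_trans (hBf z0 (hms_lt1 z0 hz0s) (η z0) hn1) (hBge z0)
        have b1 : mstar z0 ^ (η z0) ≤ B * ((κ:ℝ) ^ (α-1) * (ℓ:ℝ) ^ (1-α)) := by
          have h2 : mstar z0 ^ (η z0) ≤ B / (((η z0:ℕ):ℝ) ^ (α-1)) := by
            rw [le_div_iff₀ hp, mul_comm]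
            exact hB1
          have h3 : B / (((η z0:ℕ):ℝ) ^ (α-1)) = B * ((η z0:ℕ):ℝ) ^ (1-α) := by
            rw [div_eq_mul_inv, ← Real.rpow_neg hnℝ.le, show -(α-1) = 1-α by ring]
          have h4 : ℓ ≤ κ * η z0 := by omega
          calc mstar z0 ^ (η z0) ≤ B * ((η z0:ℕ):ℝ) ^ (1-α) := by rw [← h3]; exact h2
            _ ≤ B * ((κ:ℝ) ^ (α-1) * (ℓ:ℝ) ^ (1-α)) :=
              mul_le_mul_of_nonneg_left (hrpow_div (η z0) h4) hBpos.le
        have b2 : (aZR α (η z0))⁻¹ ≤ (κ:ℝ) ^ α / (N:ℝ) ^ α := hinv_bound (η z0) hmax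
        calc mstar z0 ^ (η z0) * (aZR α (η z0))⁻¹
            ≤ (B * ((κ:ℝ) ^ (α-1) * (ℓ:ℝ) ^ (1-α))) * ((κ:ℝ) ^ α / (N:ℝ) ^ α) :=
              mul_le_mul b1 b2 (inv_nonneg.mpr (aZR_pos α _).le) (by positivity)
          _ = coef := by rw [hcoef]
      calc ∏ z, f z (η z) = f z0 (η z0) * ∏ z ∈ Finset.univ.erase z0, f z (η z) :=
            (Finset.mul_prod_erase _ _ (Finset.mem_univ z0)).symm
        _ ≤ coef * ∏ z ∈ Finset.univ.erase z0, f z (η z) :=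
            mul_le_mul_of_nonneg_right hf0
              (Finset.prod_nonneg fun z _ => hf_nonneg _ _)
        _ = coef * ∏ z, hfun z (η z) := by rw [hprod_eq]
    calc ∑ η ∈ Uset z0, ∏ z, f z (η z) ≤ ∑ η ∈ Uset z0, coef * ∏ z, hfun z (η z) :=
          Finset.sum_le_sum hpt
      _ = coef * ∑ η ∈ Uset z0, ∏ z, hfun z (η z) := by rw [Finset.mul_sum]
      _ ≤ coef * A ^ κ := by
          apply mul_le_mul_of_nonneg_left _ hcoef0
          calc ∑ η ∈ Uset z0, ∏ z, hfun z (η z)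
              ≤ ∏ z ∈ Finset.univ.erase z0, ∑ n ∈ Finset.range (N+1), hfun z n := by
                apply sum_conf_prod_le N (Uset z0) (hUsub z0) z0 hfun hh_nonneg hh_one
                intro η hη z hz
                have hηc : η ∈ confs S N := hUsub z0 hη
                have := (Finset.mem_filter.mp hηc).1
                exact Fintype.mem_piFinset.mp this z
            _ ≤ ∏ z ∈ Finset.univ.erase z0, A := by
                apply Finset.prod_le_prod
                · intro z _; exact Finset.sum_nonneg fun n _ => hh_nonneg z n
                · intro z hz
                  have heq : ∑ n ∈ Finset.range (N+1), hfun z n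
                      = ∑ n ∈ Finset.range (N+1), f z n :=
                    Finset.sum_congr rfl (fun n _ => by
                      simp only [hhfun, if_neg (Finset.ne_of_mem_erase hz)])
                  rw [heq]
                  exact hfsum_le_A z (N+1)
            _ = A ^ (Finset.univ.erase z0).card := Finset.prod_const A
            _ ≤ A ^ κ := pow_le_pow_right₀ hA1 (Finset.card_le_univ _)
  -- bound on T-sets
  have hT_bound : ∀ p ∈ (Finset.univ : Finset S).offDiag,
      ∑ η ∈ Tset p, ∏ z, f z (η z) ≤
      (((κ:ℝ) ^ α / (N:ℝ) ^ α) * (c2 * ((κ:ℝ) ^ (α-1) * (ℓ:ℝ) ^ (1-α)))) * A ^ κ := by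
    intro p hp
    obtain ⟨-, -, hpne⟩ := Finset.mem_offDiag.mp hp
    set coef : ℝ := (κ:ℝ) ^ α / (N:ℝ) ^ α with hcoef
    have hcoef0 : 0 ≤ coef := by positivity
    set hfun : S → ℕ → ℝ := fun z n => if z = p.1 then 1 else f z n with hhfun
    have hh_nonneg : ∀ z n, 0 ≤ hfun z n := by
      intro z n
      by_cases hz : z = p.1
      · simp [hhfun, hz]
      · simp only [hhfun, if_neg hz]
        exact hf_nonneg z n
    have hh_one : ∀ n, hfun p.1 n = 1 := by intro n; simp [hhfun]
    have hprod_eq : ∀ η : S → ℕ, ∏ z ∈ Finset.univ.erase p.1, f z (η z)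
        = ∏ z, hfun z (η z) := by
      intro η
      rw [← Finset.mul_prod_erase _ (fun z => hfun z (η z)) (Finset.mem_univ p.1),
        hh_one, one_mul]
      exact Finset.prod_congr rfl (fun z hz => by
        simp only [hhfun, if_neg (Finset.ne_of_mem_erase hz)])
    have hpt : ∀ η ∈ Tset p, ∏ z, f z (η z) ≤ coef * ∏ z, hfun z (η z) := by
      intro η hη
      simp only [hTset, Finset.mem_filter] at hη
      obtain ⟨hηc, hmax, -⟩ := hη
      have hf0 : f p.1 (η p.1) ≤ coef := by
        rw [hcoef]
        exact le_trans (hf_le_inv _ _) (hinv_bound (η p.1) hmax)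
      calc ∏ z, f z (η z) = f p.1 (η p.1) * ∏ z ∈ Finset.univ.erase p.1, f z (η z) :=
            (Finset.mul_prod_erase _ _ (Finset.mem_univ p.1)).symm
        _ ≤ coef * ∏ z ∈ Finset.univ.erase p.1, f z (η z) :=
            mul_le_mul_of_nonneg_right hf0
              (Finset.prod_nonneg fun z _ => hf_nonneg _ _)
        _ = coef * ∏ z, hfun z (η z) := by rw [hprod_eq]
    -- the box
    set tbox : S → Finset ℕ := fun z =>
      if z = p.2 then (Finset.range (N+1)).filter (fun n => ℓ < κ * n)
      else Finset.range (N+1) with htbox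
    set t0 : ℕ := ℓ / κ + 1 with ht0
    have ht0ge1 : 1 ≤ t0 := by rw [ht0]; exact Nat.succ_le_succ (Nat.zero_le _)
    have hℓltκt0 : ℓ < κ * t0 := by
      calc ℓ = κ * (ℓ/κ) + ℓ % κ := (Nat.div_add_mod ℓ κ).symm
        _ < κ * (ℓ/κ) + κ := Nat.add_lt_add_left (Nat.mod_lt ℓ hκ0) _
        _ = κ * t0 := by rw [ht0]; ring
    have hz1fac : ∑ n ∈ (Finset.range (N+1)).filter (fun n => ℓ < κ * n), f p.2 n
        ≤ c2 * ((κ:ℝ) ^ (α-1) * (ℓ:ℝ) ^ (1-α)) := by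
      calc ∑ n ∈ (Finset.range (N+1)).filter (fun n => ℓ < κ * n), f p.2 n
          ≤ ∑ n ∈ (Finset.range (N+1)).filter (fun n => ℓ < κ * n), ((n:ℝ) ^ α)⁻¹ := by
            apply Finset.sum_le_sum
            intro n hn
            have hnf := Finset.mem_filter.mp hn
            have hn1 : 1 ≤ n := by
              rcases Nat.eq_zero_or_pos n with h | h
              · exfalso; rw [h, Nat.mul_zero] at hnf; omega
              · exact h
            calc f p.2 n ≤ (aZR α n)⁻¹ := hf_le_inv _ _
              _ = ((n:ℝ) ^ α)⁻¹ := by rw [aZR_eq α hn1]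
        _ ≤ ∑ n ∈ Finset.Icc t0 N, ((n:ℝ) ^ α)⁻¹ := by
            apply Finset.sum_le_sum_of_subset_of_nonneg
            · intro n hn
              have hnf := Finset.mem_filter.mp hn
              have hn2 : n ≤ N := by
                have := Finset.mem_range.mp hnf.1
                omega
              have hn3 : t0 ≤ n := by
                by_contra hcon
                push_neg at hcon
                rw [ht0] at hcon
                have hle : n ≤ ℓ / κ := Nat.lt_succ_iff.mp hcon
                have h4 : κ * n ≤ κ * (ℓ / κ) := Nat.mul_le_mul_left κ hle
                have h5 : κ * (ℓ / κ) ≤ ℓ := by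
                  calc κ * (ℓ/κ) = (ℓ/κ) * κ := by ring
                    _ ≤ ℓ := Nat.div_mul_le_self ℓ κ
                exact absurd (lt_of_lt_of_le hnf.2 (le_trans h4 h5)) (lt_irrefl ℓ)
              exact Finset.mem_Icc.mpr ⟨hn3, hn2⟩
            · intro n _ _; positivity
        _ ≤ c2 * (t0:ℝ) ^ (1-α) := tail_sum α hα t0 N ht0ge1
        _ ≤ c2 * ((κ:ℝ) ^ (α-1) * (ℓ:ℝ) ^ (1-α)) :=
            mul_le_mul_of_nonneg_left (hrpow_div t0 hℓltκt0.le) hc2pos.le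
    have hz1mem : p.2 ∈ Finset.univ.erase p.1 :=
      Finset.mem_erase.mpr ⟨Ne.symm hpne, Finset.mem_univ _⟩
    calc ∑ η ∈ Tset p, ∏ z, f z (η z) ≤ ∑ η ∈ Tset p, coef * ∏ z, hfun z (η z) :=
          Finset.sum_le_sum hpt
      _ = coef * ∑ η ∈ Tset p, ∏ z, hfun z (η z) := by rw [Finset.mul_sum]
      _ ≤ coef * ((c2 * ((κ:ℝ) ^ (α-1) * (ℓ:ℝ) ^ (1-α))) * A ^ κ) := by
          apply mul_le_mul_of_nonneg_left _ hcoef0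
          calc ∑ η ∈ Tset p, ∏ z, hfun z (η z)
              ≤ ∏ z ∈ Finset.univ.erase p.1, ∑ n ∈ tbox z, hfun z n := by
                apply sum_conf_prod_le N (Tset p) (hTsub p) p.1 hfun hh_nonneg hh_one
                intro η hη z hz
                have hηc : η ∈ confs S N := hTsub p hη
                have hηr := Fintype.mem_piFinset.mp (Finset.mem_filter.mp hηc).1 z
                by_cases hz2 : z = p.2
                · subst hz2
                  simp only [htbox, if_pos rfl, Finset.mem_filter]
                  refine ⟨hηr, ?_⟩
                  simp only [hTset, Finset.mem_filter] at hη
                  exact hη.2.2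
                · simp only [htbox, if_neg hz2]
                  exact hηr
            _ ≤ (c2 * ((κ:ℝ) ^ (α-1) * (ℓ:ℝ) ^ (1-α))) * A ^ κ := by
                rw [← Finset.mul_prod_erase _ _ hz1mem]
                have hfaceq : ∑ n ∈ tbox p.2, hfun p.2 n
                    = ∑ n ∈ (Finset.range (N+1)).filter (fun n => ℓ < κ * n), f p.2 n := by
                  simp only [htbox, if_pos rfl]
                  exact Finset.sum_congr rfl (fun n _ => by
                    simp only [hhfun, if_neg (Ne.symm hpne)])
                apply mul_le_mul
                · rw [hfaceq]; exact hz1fac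
                · calc ∏ z ∈ (Finset.univ.erase p.1).erase p.2, ∑ n ∈ tbox z, hfun z n
                      ≤ ∏ z ∈ (Finset.univ.erase p.1).erase p.2, A := by
                        apply Finset.prod_le_prod
                        · intro z _; exact Finset.sum_nonneg fun n _ => hh_nonneg z n
                        · intro z hz
                          have hzp2 : z ≠ p.2 := Finset.ne_of_mem_erase hz
                          have hzp1 : z ≠ p.1 :=
                            Finset.ne_of_mem_erase (Finset.mem_of_mem_erase hz)
                          have heq : ∑ n ∈ tbox z, hfun z n
                              = ∑ n ∈ Finset.range (N+1), f z n := by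
                            simp only [htbox, if_neg hzp2]
                            exact Finset.sum_congr rfl (fun n _ => by
                              simp only [hhfun, if_neg hzp1])
                          rw [heq]
                          exact hfsum_le_A z (N+1)
                    _ = A ^ ((Finset.univ.erase p.1).erase p.2).card := Finset.prod_const A
                    _ ≤ A ^ κ := pow_le_pow_right₀ hA1 (Finset.card_le_univ _)
                · apply Finset.prod_nonneg
                  intro z _
                  exact Finset.sum_nonneg fun n _ => hh_nonneg z n
                · positivity
      _ = (((κ:ℝ) ^ α / (N:ℝ) ^ α) * (c2 * ((κ:ℝ) ^ (α-1) * (ℓ:ℝ) ^ (1-α)))) * A ^ κ := by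
          rw [hcoef]; ring
  -- summing
  have hsum_U : ∑ z0 : S, ∑ η ∈ Uset z0, ∏ z, f z (η z) ≤
      (κ:ℝ) * ((B * ((κ:ℝ) ^ (α-1) * (ℓ:ℝ) ^ (1-α)) * ((κ:ℝ) ^ α / (N:ℝ) ^ α)) * A ^ κ) := by
    calc ∑ z0 : S, ∑ η ∈ Uset z0, ∏ z, f z (η z)
        ≤ ∑ _z0 : S, (B * ((κ:ℝ) ^ (α-1) * (ℓ:ℝ) ^ (1-α)) * ((κ:ℝ) ^ α / (N:ℝ) ^ α)) * A ^ κ :=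
          Finset.sum_le_sum (fun z0 _ => hU_bound z0)
      _ = (κ:ℝ) * ((B * ((κ:ℝ) ^ (α-1) * (ℓ:ℝ) ^ (1-α)) * ((κ:ℝ) ^ α / (N:ℝ) ^ α)) * A ^ κ) := by
          rw [Finset.sum_const, Finset.card_univ, nsmul_eq_mul]
  have hsum_T : ∑ p ∈ (Finset.univ : Finset S).offDiag, ∑ η ∈ Tset p, ∏ z, f z (η z) ≤
      ((κ:ℝ) * (κ:ℝ)) * ((((κ:ℝ) ^ α / (N:ℝ) ^ α) * (c2 * ((κ:ℝ) ^ (α-1) * (ℓ:ℝ) ^ (1-α)))) * A ^ κ) := by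
    have hDT0 : (0:ℝ) ≤ (((κ:ℝ) ^ α / (N:ℝ) ^ α) * (c2 * ((κ:ℝ) ^ (α-1) * (ℓ:ℝ) ^ (1-α)))) * A ^ κ := by
      positivity
    calc ∑ p ∈ (Finset.univ : Finset S).offDiag, ∑ η ∈ Tset p, ∏ z, f z (η z)
        ≤ ∑ _p ∈ (Finset.univ : Finset S).offDiag,
            (((κ:ℝ) ^ α / (N:ℝ) ^ α) * (c2 * ((κ:ℝ) ^ (α-1) * (ℓ:ℝ) ^ (1-α)))) * A ^ κ :=
          Finset.sum_le_sum hT_bound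
      _ = ((Finset.univ : Finset S).offDiag.card : ℝ) *
          ((((κ:ℝ) ^ α / (N:ℝ) ^ α) * (c2 * ((κ:ℝ) ^ (α-1) * (ℓ:ℝ) ^ (1-α)))) * A ^ κ) := by
          rw [Finset.sum_const, nsmul_eq_mul]
      _ ≤ ((κ:ℝ) * (κ:ℝ)) * ((((κ:ℝ) ^ α / (N:ℝ) ^ α) * (c2 * ((κ:ℝ) ^ (α-1) * (ℓ:ℝ) ^ (1-α)))) * A ^ κ) := by
          apply mul_le_mul_of_nonneg_right _ hDT0
          have hcard : (Finset.univ : Finset S).offDiag.card ≤ κ * κ := by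
            rw [Finset.offDiag_card, Finset.card_univ]
            exact Nat.sub_le _ _
          calc ((Finset.univ : Finset S).offDiag.card : ℝ) ≤ ((κ * κ : ℕ) : ℝ) := by
                exact_mod_cast hcard
            _ = (κ:ℝ) * (κ:ℝ) := by push_cast; ring
  -- final computation
  have hκsR : (0:ℝ) < (κstar:ℝ) := by exact_mod_cast hκs1
  have hbadsum_nonneg : 0 ≤ ∑ η ∈ badset, ∏ z, f z (η z) :=
    Finset.sum_nonneg fun η _ => hw_nonneg η
  have hZN : Z N = (N:ℝ) ^ α * ((∑ η ∈ bigset, ∏ z, f z (η z))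
      + ∑ η ∈ badset, ∏ z, f z (η z)) := by
    rw [hZ N, show (∑ η ∈ confs S N, ∏ x, mstar x ^ η x / aZR α (η x))
      = ∑ η ∈ confs S N, ∏ z, f z (η z) from rfl, hsplit]
  have key : (N:ℝ) ^ α * (∑ η ∈ (confs S N).filter (fun η => N - ℓ ≤ η x),
        ∏ z, mstar z ^ η z / aZR α (η z)) - Z N / (κstar:ℝ)
      = -(((N:ℝ) ^ α * ∑ η ∈ badset, ∏ z, f z (η z)) / (κstar:ℝ)) := by
    rw [show (∑ η ∈ (confs S N).filter (fun η => N - ℓ ≤ η x),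
        ∏ z, mstar z ^ η z / aZR α (η z))
      = ∑ η ∈ (confs S N).filter (fun η => N - ℓ ≤ η x), ∏ z, f z (η z) from rfl]
    rw [hZN, ← hgood]
    field_simp
    ring
  rw [key, abs_neg, abs_of_nonneg (by positivity)]
  have hstep1 : ((N:ℝ) ^ α * ∑ η ∈ badset, ∏ z, f z (η z)) / (κstar:ℝ)
      ≤ (N:ℝ) ^ α * ∑ η ∈ badset, ∏ z, f z (η z) := by
    apply div_le_self (by positivity)
    exact_mod_cast hκs1
  have hstep2 : (N:ℝ) ^ α * ∑ η ∈ badset, ∏ z, f z (η z) ≤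
      ((κ:ℝ) * (B * ((κ:ℝ) ^ (α-1)) * (κ:ℝ) ^ α * A ^ κ)
        + (κ:ℝ) * (κ:ℝ) * ((κ:ℝ) ^ α * (c2 * (κ:ℝ) ^ (α-1)) * A ^ κ)) * (ℓ:ℝ) ^ (1-α) := by
    calc (N:ℝ) ^ α * ∑ η ∈ badset, ∏ z, f z (η z)
        ≤ (N:ℝ) ^ α * (((κ:ℝ) * ((B * ((κ:ℝ) ^ (α-1) * (ℓ:ℝ) ^ (1-α)) * ((κ:ℝ) ^ α / (N:ℝ) ^ α)) * A ^ κ))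
          + ((κ:ℝ) * (κ:ℝ)) * ((((κ:ℝ) ^ α / (N:ℝ) ^ α) * (c2 * ((κ:ℝ) ^ (α-1) * (ℓ:ℝ) ^ (1-α)))) * A ^ κ)) := by
          apply mul_le_mul_of_nonneg_left _ hNα.le
          exact le_trans hbad_le (add_le_add hsum_U hsum_T)
      _ = ((κ:ℝ) * (B * ((κ:ℝ) ^ (α-1)) * (κ:ℝ) ^ α * A ^ κ)
          + (κ:ℝ) * (κ:ℝ) * ((κ:ℝ) ^ α * (c2 * (κ:ℝ) ^ (α-1)) * A ^ κ)) * (ℓ:ℝ) ^ (1-α) := by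
          field_simp
  have hrw : ((κ:ℝ) * (B * (κ:ℝ) ^ (α-1) * (κ:ℝ) ^ α * A ^ κ)
      + (κ:ℝ) * (κ:ℝ) * ((κ:ℝ) ^ α * (c2 * (κ:ℝ) ^ (α-1)) * A ^ κ)) / (ℓ:ℝ) ^ (α-1)
      = ((κ:ℝ) * (B * ((κ:ℝ) ^ (α-1)) * (κ:ℝ) ^ α * A ^ κ)
      + (κ:ℝ) * (κ:ℝ) * ((κ:ℝ) ^ α * (c2 * (κ:ℝ) ^ (α-1)) * A ^ κ)) * (ℓ:ℝ) ^ (1-α) := by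
    rw [div_eq_mul_inv, ← Real.rpow_neg hℓℝ.le, show -(α-1) = 1-α by ring]
  rw [hrw]
  exact le_trans hstep1 hstep2
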